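/- For any real number x > 0, one has √x·(1 + (1/2)·((x − 1)/(x + 1))²) ≤ √x·(1 + (1/8)·(ln x)²) ≤ (x + 1)/2. -/

import Mathlib

open Real

lemma cosh_lb (t : ℝ) (ht : 0 ≤ t) : 1 + t ^ 2 / 2 ≤ Real.cosh t := by
  have key : MonotoneOn (fun s : ℝ => Real.cosh s - (1 + s ^ 2 / 2)) (Set.Ici 0) := by
    apply monotoneOn_of_deriv_nonneg (convex_Ici 0)
    · fun_prop
    · intro s hs
      exact ((Real.differentiable_cosh s).sub (by fun_prop)).differentiableWithinAt
    · intro s hs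
      simp only [interior_Ici, Set.mem_Ioi] at hs
      have hd : HasDerivAt (fun s : ℝ => Real.cosh s - (1 + s ^ 2 / 2))
          (Real.sinh s - s) s := by
        have h1 := Real.hasDerivAt_cosh s
        have h2 : HasDerivAt (fun s : ℝ => 1 + s ^ 2 / 2) s s := by
          have := ((hasDerivAt_pow 2 s).div_const 2).const_add 1
          simpa using this
        exact h1.sub h2
      rw [hd.deriv]
      have := Real.self_lt_sinh_iff.mpr hs
      linarith
  have h0 := key (Set.self_mem_Ici) (by exact ht) ht
  simp [Real.cosh_zero] at h0
  linarith

lemma log_lb (x : ℝ) (hx : 1 ≤ x) : 2 * (x - 1) / (x + 1) ≤ Real.log x := by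
  have key : MonotoneOn (fun s : ℝ => Real.log s - 2 * (s - 1) / (s + 1)) (Set.Ici 1) := by
    apply monotoneOn_of_deriv_nonneg (convex_Ici 1)
    · apply ContinuousOn.sub
      · exact fun s hs => (Real.continuousAt_log (by simp at hs; linarith)).continuousWithinAt
      · apply ContinuousOn.div (by fun_prop) (by fun_prop)
        intro s hs; simp at hs; intro h; linarith
    · intro s hs
      simp only [interior_Ici, Set.mem_Ioi] at hs
      apply DifferentiableAt.differentiableWithinAt
      apply DifferentiableAt.sub
      · exact Real.differentiableAt_log (by linarith)
      · apply DifferentiableAt.div (by fun_prop) (by fun_prop); intro h; linarith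
    · intro s hs
      simp only [interior_Ici, Set.mem_Ioi] at hs
      have hs0 : s ≠ 0 := by linarith
      have hs1 : s + 1 ≠ 0 := by intro h; linarith
      have hd : HasDerivAt (fun s : ℝ => Real.log s - 2 * (s - 1) / (s + 1))
          (s⁻¹ - (2 * (s + 1) - 2 * (s - 1) * 1) / (s + 1) ^ 2) s := by
        have h1 := Real.hasDerivAt_log hs0
        have h2 : HasDerivAt (fun s : ℝ => 2 * (s - 1)) 2 s := by
          simpa using ((hasDerivAt_id s).sub_const 1).const_mul 2
        have h3 : HasDerivAt (fun s : ℝ => s + 1) 1 s := by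
          simpa using (hasDerivAt_id s).add_const 1
        exact h1.sub (h2.div h3 hs1)
      rw [hd.deriv]
      rw [sub_nonneg, inv_eq_one_div, div_le_div_iff₀ (by positivity) (by positivity)]
      nlinarith [sq_nonneg (s - 1), sq_nonneg s]
  have h0 := key (Set.self_mem_Ici) hx hx
  simp at h0
  linarith

theorem sqrt_frac_le_sqrt_log (x : ℝ) (hx : 0 < x) :
    Real.sqrt x * (1 + (1 / 2) * ((x - 1) / (x + 1)) ^ 2) ≤
        Real.sqrt x * (1 + (1 / 8) * (Real.log x) ^ 2) ∧
      Real.sqrt x * (1 + (1 / 8) * (Real.log x) ^ 2) ≤ (x + 1) / 2 := by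
  have hx1 : (0:ℝ) < x + 1 := by linarith
  constructor
  · apply mul_le_mul_of_nonneg_left _ (Real.sqrt_nonneg x)
    have habs : |2 * (x - 1) / (x + 1)| ≤ |Real.log x| := by
      rcases le_or_gt 1 x with h | h
      · have h1 := log_lb x h
        rw [abs_of_nonneg (div_nonneg (by linarith) (by linarith)),
          abs_of_nonneg (Real.log_nonneg h)]
        exact h1
      · have hinv : 1 ≤ 1 / x := by rw [le_div_iff₀ hx]; linarith
        have h1 := log_lb (1 / x) hinv
        rw [Real.log_div one_ne_zero (ne_of_gt hx), Real.log_one] at h1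
        have heq : 2 * (1 / x - 1) / (1 / x + 1) = 2 * (1 - x) / (x + 1) := by
          rw [div_eq_div_iff (by positivity) (by positivity)]
          field_simp
          ring
        rw [heq] at h1
        have hlog : Real.log x ≤ 0 := Real.log_nonpos hx.le h.le
        rw [abs_of_nonpos hlog]
        rw [abs_of_nonpos (div_nonpos_of_nonpos_of_nonneg (by nlinarith) hx1.le)]
        have hneg : -(2 * (x - 1) / (x + 1)) = 2 * (1 - x) / (x + 1) := by ring
        rw [hneg]
        linarith
    have hsq : (2 * (x - 1) / (x + 1)) ^ 2 ≤ (Real.log x) ^ 2 := by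
      rw [← sq_abs (2 * (x - 1) / (x + 1)), ← sq_abs (Real.log x)]
      exact pow_le_pow_left₀ (abs_nonneg _) habs 2
    have : (2 * (x - 1) / (x + 1)) ^ 2 = 4 * ((x - 1) / (x + 1)) ^ 2 := by
      rw [mul_div_assoc, mul_pow]; norm_num
    nlinarith
  · set t := Real.log x / 2 with ht
    have hsqrt : Real.sqrt x = Real.exp t := by
      rw [show x = Real.exp t ^ 2 by
        rw [← Real.exp_nat_mul]
        rw [show (2:ℕ) * t = Real.log x by push_cast [ht]; ring, Real.exp_log hx]]
      exact Real.sqrt_sq (Real.exp_pos t).le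
    have hxeq : x = Real.exp t * Real.exp t := by
      rw [← Real.exp_add, show t + t = Real.log x by rw [ht]; ring, Real.exp_log hx]
    have hcosh := cosh_lb |t| (abs_nonneg t)
    rw [Real.cosh_abs, sq_abs, Real.cosh_eq] at hcosh
    have hinv : Real.exp (-t) * Real.exp t = 1 := by
      rw [← Real.exp_add]; simp
    have hmul : (2 + t ^ 2) * Real.exp t ≤ Real.exp t * Real.exp t + 1 := by
      have h2 : 2 + t ^ 2 ≤ Real.exp (-t) + Real.exp t := by linarith
      nlinarith [Real.exp_pos t]
    rw [show Real.log x = 2 * t by rw [ht]; ring, hsqrt, hxeq]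
    nlinarith [Real.exp_pos t]
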